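/- arXiv:2108.05703 — 2 statements merged into one kernel-verified Lean document; each statement's English description precedes it below -/
import Mathlib

section
/- The operator T_θ on H ⊕ ℂ is self-adjoint (with respect to the Hilbert adjoint) if and only if exp(iθ) ∈ {1, −1}, U ξ = ξ, and U is self-adjoint (equivalently, U is a unitary involution: U ∘ U = identity). -/
open scoped InnerProductSpace

noncomputable section

variable {H : Type*} [NormedAddCommGroup H] [InnerProductSpace ℂ H]

/-- The vector `(x, z)` of the Hilbert space direct sum `H ⊕ ℂ`. -/
def mkE (x : H) (z : ℂ) : WithLp 2 (H × ℂ) := (WithLp.equiv 2 (H × ℂ)).symm (x, z)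

@[simp] lemma mkE_fst (x : H) (z : ℂ) : (mkE x z).fst = x := rfl
@[simp] lemma mkE_snd (x : H) (z : ℂ) : (mkE x z).snd = z := rfl

lemma inner_mkE (x y : H) (z w : ℂ) :
    ⟪mkE x z, mkE y w⟫_ℂ = ⟪x, y⟫_ℂ + starRingEnd ℂ z * w := by
  simp [mkE, RCLike.inner_apply]; ring

/-- With `ξ ≠ 0`, `a = √(1 + ‖ξ‖²)`, `A x = x + ((a−1)/‖ξ‖²)·⟨x,ξ⟩·ξ`, `U` unitary, `θ ∈ ℝ`,
and `T_θ(x,z) = e^{iθ}·(U(A x) + z·U ξ, ⟨x,ξ⟩ + a·z)`: the operator `T_θ` is self-adjoint iff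
`e^{iθ} ∈ {1, −1}`, `U ξ = ξ` and `U` is self-adjoint (equivalently, a unitary involution).
(The paper's inner product `⟨x,y⟩` is linear in the first slot, i.e. `⟪y,x⟫_ℂ` in Mathlib's
convention.) -/
theorem stmt14 [CompleteSpace H]
    (ξ : H) (hξ : ξ ≠ 0) (a : ℝ) (ha : a = Real.sqrt (1 + ‖ξ‖ ^ 2))
    (A : H →L[ℂ] H)
    (hA : ∀ x : H, A x = x + ((((a - 1) / ‖ξ‖ ^ 2 : ℝ) : ℂ) * ⟪ξ, x⟫_ℂ) • ξ)
    (U : H →L[ℂ] H) (hU : U ∈ unitary (H →L[ℂ] H)) (θ : ℝ)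
    (T : WithLp 2 (H × ℂ) →L[ℂ] WithLp 2 (H × ℂ))
    (hT : ∀ (x : H) (z : ℂ),
      T (mkE x z) =
        Complex.exp (θ * Complex.I) • mkE (U (A x) + z • U ξ) (⟪ξ, x⟫_ℂ + (a : ℂ) * z)) :
    IsSelfAdjoint T ↔
      (Complex.exp (θ * Complex.I) = 1 ∨ Complex.exp (θ * Complex.I) = -1) ∧
        U ξ = ξ ∧ IsSelfAdjoint U := by
  set c : ℂ := Complex.exp (θ * Complex.I) with hc
  have hc0 : c ≠ 0 := Complex.exp_ne_zero _
  have habs : ‖c‖ = 1 := by simp [hc, Complex.norm_exp]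
  have hmc : c * starRingEnd ℂ c = 1 := by
    rw [Complex.mul_conj, Complex.normSq_eq_norm_sq, habs]; norm_num
  have ha0 : 0 < a := by rw [ha]; positivity
  set r : ℂ := (((a - 1) / ‖ξ‖ ^ 2 : ℝ) : ℂ) with hr
  have hrconj : starRingEnd ℂ r = r := Complex.conj_ofReal _
  constructor
  · intro h
    have hs := ContinuousLinearMap.isSelfAdjoint_iff_isSymmetric.mp h
    have hcc : starRingEnd ℂ c = c := by
      have h1 := hs (mkE (0 : H) 1) (mkE (0 : H) 1)
      simp [hT, inner_mkE, inner_smul_left, inner_smul_right] at h1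
      exact h1.resolve_right (by exact_mod_cast ha0.ne')
    have hc2 : c = 1 ∨ c = -1 := by
      rw [hcc] at hmc
      exact mul_self_eq_one_iff.mp hmc
    have hUξ : U ξ = ξ := by
      apply ext_inner_right ℂ
      intro y
      have h2 := hs (mkE (0 : H) 1) (mkE y 0)
      simp [hT, inner_mkE, inner_smul_left, inner_smul_right, hcc] at h2
      exact h2.resolve_right hc0
    have hUsym : ∀ x y : H, ⟪U x, y⟫_ℂ = ⟪x, U y⟫_ℂ := by
      intro x y
      have h3 := hs (mkE x 0) (mkE y 0)
      simp [hT, inner_mkE, inner_smul_left, inner_smul_right, hcc] at h3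
      have h4 := h3.resolve_right hc0
      rw [hA x, hA y] at h4
      simp only [map_add, map_smul, hUξ, inner_add_left, inner_add_right,
        inner_smul_left, inner_smul_right, map_mul, hrconj, inner_conj_symm] at h4
      linear_combination h4
    refine ⟨hc2, hUξ, ContinuousLinearMap.isSelfAdjoint_iff_isSymmetric.mpr ?_⟩
    intro x y
    simpa using hUsym x y
  · rintro ⟨hc2, hUξ, hUsa⟩
    have hcc : starRingEnd ℂ c = c := by
      rcases hc2 with h | h <;> rw [h] <;> simp
    have hUsym := ContinuousLinearMap.isSelfAdjoint_iff_isSymmetric.mp hUsa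
    apply ContinuousLinearMap.isSelfAdjoint_iff_isSymmetric.mpr
    intro u v
    have hu : u = mkE u.fst u.snd := rfl
    have hv : v = mkE v.fst v.snd := rfl
    rw [hu, hv]
    have hUA : ∀ x : H, U (A x) = U x + (r * ⟪ξ, x⟫_ℂ) • ξ := by
      intro x; rw [hA x]; simp [map_add, map_smul, hUξ]
    simp only [ContinuousLinearMap.coe_coe, hT, inner_smul_left, inner_smul_right,
      inner_mkE, hUA, hUξ, inner_add_left, inner_add_right, inner_smul_left,
      inner_smul_right, map_add, map_mul, hrconj, hcc, Complex.conj_ofReal,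
      inner_conj_symm]
    have := hUsym u.fst v.fst
    simp only [ContinuousLinearMap.coe_coe] at this
    linear_combination c * this


end
end

section
/- Let V be a unitary operator on H and let D_V be the unitary operator on H ⊕ ℂ given by D_V(x,z) = (V x, z). Then D_V⁻¹ ∘ T_θ ∘ D_V = T_θ⁻¹ if and only if V⁻¹ ∘ (U ∘ A) ∘ V = (U ∘ A)* (the Hilbert adjoint of U ∘ A), V ξ = −U ξ, V⁻¹ ξ = −U ξ, and exp(iθ) ∈ {1, −1}. -/
open scoped InnerProductSpace

noncomputable section

variable {H : Type*} [NormedAddCommGroup H] [InnerProductSpace ℂ H]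

theorem smul_mkE (c : ℂ) (x : H) (z : ℂ) : c • mkE x z = mkE (c • x) (c * z) := rfl

set_option linter.unusedSectionVars false in
theorem mkE_inj {x y : H} {z w : ℂ} (h : mkE x z = mkE y w) : x = y ∧ z = w :=
  ⟨congrArg (fun v : WithLp 2 (H × ℂ) => v.ofLp.1) h, congrArg (fun v : WithLp 2 (H × ℂ) => v.ofLp.2) h⟩

/-- With `ξ ≠ 0`, `a = √(1 + ‖ξ‖²)`, `A x = x + ((a−1)/‖ξ‖²)·⟨x,ξ⟩·ξ`, `U` unitary, `θ ∈ ℝ`,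
`T_θ(x,z) = e^{iθ}·(U(A x) + z·U ξ, ⟨x,ξ⟩ + a·z)` with inverse `T_θ⁻¹`, and `V` a unitary on
`H` with inverse `V⁻¹`, inducing `D_V(x,z) = (V x, z)` on `H ⊕ ℂ` with inverse
`D_V⁻¹(x,z) = (V⁻¹ x, z)`: one has `D_V⁻¹ ∘ T_θ ∘ D_V = T_θ⁻¹` iff
`V⁻¹ ∘ (U∘A) ∘ V = (U∘A)*`, `V ξ = −U ξ`, `V⁻¹ ξ = −U ξ` and `e^{iθ} ∈ {1, −1}`.
(The paper's inner product `⟨x,y⟩` is linear in the first slot, i.e. `⟪y,x⟫_ℂ` in Mathlib's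
convention.) -/
theorem stmt17 [CompleteSpace H]
    (ξ : H) (hξ : ξ ≠ 0) (a : ℝ) (ha : a = Real.sqrt (1 + ‖ξ‖ ^ 2))
    (A : H →L[ℂ] H)
    (hA : ∀ x : H, A x = x + ((((a - 1) / ‖ξ‖ ^ 2 : ℝ) : ℂ) * ⟪ξ, x⟫_ℂ) • ξ)
    (U : H →L[ℂ] H) (hU : U ∈ unitary (H →L[ℂ] H)) (θ : ℝ)
    (T : WithLp 2 (H × ℂ) →L[ℂ] WithLp 2 (H × ℂ))
    (hT : ∀ (x : H) (z : ℂ),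
      T (mkE x z) =
        Complex.exp (θ * Complex.I) • mkE (U (A x) + z • U ξ) (⟪ξ, x⟫_ℂ + (a : ℂ) * z))
    (Tinv : WithLp 2 (H × ℂ) →L[ℂ] WithLp 2 (H × ℂ))
    (hTinv : Tinv ∘L T = 1 ∧ T ∘L Tinv = 1)
    (V : H →L[ℂ] H) (hV : V ∈ unitary (H →L[ℂ] H))
    (Vinv : H →L[ℂ] H) (hVinv : Vinv ∘L V = 1 ∧ V ∘L Vinv = 1)
    (D : WithLp 2 (H × ℂ) →L[ℂ] WithLp 2 (H × ℂ))
    (hD : ∀ (x : H) (z : ℂ), D (mkE x z) = mkE (V x) z)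
    (Dinv : WithLp 2 (H × ℂ) →L[ℂ] WithLp 2 (H × ℂ))
    (hDinv : ∀ (x : H) (z : ℂ), Dinv (mkE x z) = mkE (Vinv x) z) :
    Dinv ∘L T ∘L D = Tinv ↔
      Vinv ∘L (U ∘L A) ∘L V = ContinuousLinearMap.adjoint (U ∘L A) ∧
        V ξ = -(U ξ) ∧ Vinv ξ = -(U ξ) ∧
        (Complex.exp (θ * Complex.I) = 1 ∨ Complex.exp (θ * Complex.I) = -1) := by
  -- scalar facts
  have hn : (‖ξ‖ : ℝ) ≠ 0 := norm_ne_zero_iff.2 hξ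
  have hn2 : (‖ξ‖ ^ 2 : ℝ) ≠ 0 := pow_ne_zero _ hn
  have hn2c : ((‖ξ‖ : ℂ)) ^ 2 ≠ 0 := by exact_mod_cast hn2
  have hip : ⟪ξ, ξ⟫_ℂ = (‖ξ‖ : ℂ) ^ 2 := inner_self_eq_norm_sq_to_K ξ
  have hapos : 0 < a := by rw [ha]; positivity
  have ha2 : a ^ 2 = 1 + ‖ξ‖ ^ 2 := by rw [ha, Real.sq_sqrt]; positivity
  have ha2c : (a : ℂ) ^ 2 = 1 + (‖ξ‖ : ℂ) ^ 2 := by exact_mod_cast ha2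
  have haC : (a : ℂ) ≠ 0 := by exact_mod_cast ne_of_gt hapos
  set c : ℂ := (((a - 1) / ‖ξ‖ ^ 2 : ℝ) : ℂ) with hc
  have hcn : c * (‖ξ‖ : ℂ) ^ 2 = (a : ℂ) - 1 := by rw [hc]; push_cast; field_simp; exact mul_div_cancel_right₀ _ (by exact_mod_cast hn)
  have hc1 : c * ((a : ℂ) + 1) = 1 := by
    have h0 : (c * ((a : ℂ) + 1) - 1) * (‖ξ‖ : ℂ) ^ 2 = 0 := by
      linear_combination ((a : ℂ) + 1) * hcn + ha2c
    rcases mul_eq_zero.1 h0 with h | h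
    · exact sub_eq_zero.1 h
    · exact absurd h hn2c
  -- exp facts
  have hee' : Complex.exp (θ * Complex.I) * Complex.exp (-(θ * Complex.I)) = 1 := by
    rw [← Complex.exp_add]; simp
  have he'e : Complex.exp (-(θ * Complex.I)) * Complex.exp (θ * Complex.I) = 1 := by
    rw [mul_comm]; exact hee'
  have hene : Complex.exp (θ * Complex.I) ≠ 0 := Complex.exp_ne_zero _
  -- A facts
  have hAξ : A ξ = (a : ℂ) • ξ := by rw [hA, hip, hcn]; module
  have hξA : ∀ x, ⟪ξ, A x⟫_ℂ = (a : ℂ) * ⟪ξ, x⟫_ℂ := by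
    intro x
    rw [hA, inner_add_right, inner_smul_right, hip]
    linear_combination ⟪ξ, x⟫_ℂ * hcn
  have hA2 : ∀ x, A (A x) = x + ⟪ξ, x⟫_ℂ • ξ := by
    intro x
    rw [hA (A x), hξA, hA x]
    match_scalars
    · ring
    · linear_combination ⟪ξ, x⟫_ℂ * hc1
  have hAsym : ∀ x y : H, ⟪A x, y⟫_ℂ = ⟪x, A y⟫_ℂ := by
    intro x y
    rw [hA x, hA y, inner_add_left, inner_add_right, inner_smul_left, inner_smul_right]
    rw [← inner_conj_symm ξ x]
    simp [hc, mul_comm, mul_assoc, mul_left_comm]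
  have hAadj : ContinuousLinearMap.adjoint A = A :=
    ((ContinuousLinearMap.eq_adjoint_iff A A).2 hAsym).symm
  -- unitary facts
  set Ust := ContinuousLinearMap.adjoint U with hUstdef
  have hU1 : ∀ x, Ust (U x) = x := by
    intro x
    have h : (star U * U) x = (1 : H →L[ℂ] H) x := by rw [hU.1]
    simpa [ContinuousLinearMap.star_eq_adjoint] using h
  have hU2 : ∀ x, U (Ust x) = x := by
    intro x
    have h : (U * star U) x = (1 : H →L[ℂ] H) x := by rw [hU.2]
    simpa [ContinuousLinearMap.star_eq_adjoint] using h
  have hVst : ContinuousLinearMap.adjoint V = Vinv := by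
    have h1 : Vinv * V = 1 := hVinv.1
    have h2 : V * ContinuousLinearMap.adjoint V = 1 := by
      simpa [ContinuousLinearMap.star_eq_adjoint] using hV.2
    exact (left_inv_eq_right_inv h1 h2).symm
  have hV1 : ∀ x, Vinv (V x) = x := by
    intro x
    have h : (Vinv ∘L V) x = (1 : H →L[ℂ] H) x := by rw [hVinv.1]
    simpa using h
  have hV2 : ∀ x, V (Vinv x) = x := by
    intro x
    have h : (V ∘L Vinv) x = (1 : H →L[ℂ] H) x := by rw [hVinv.2]
    simpa using h
  have hadjUA : ContinuousLinearMap.adjoint (U ∘L A) = A ∘L Ust := by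
    rw [ContinuousLinearMap.adjoint_comp, hAadj]
  -- Tinv values
  have hTval : ∀ (x : H) (z : ℂ), Tinv (mkE x z) =
      Complex.exp (-(θ * Complex.I)) • mkE (A (Ust x) - z • ξ) (-⟪ξ, Ust x⟫_ℂ + (a : ℂ) * z) := by
    intro x z
    set w := Complex.exp (-(θ * Complex.I)) •
      mkE (A (Ust x) - z • ξ) (-⟪ξ, Ust x⟫_ℂ + (a : ℂ) * z) with hw
    have hTw : T w = mkE x z := by
      rw [hw, map_smul, hT, smul_smul, he'e, one_smul]
      have h1 : U (A (A (Ust x) - z • ξ)) + (-⟪ξ, Ust x⟫_ℂ + (a : ℂ) * z) • U ξ = x := by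
        rw [map_sub, map_smul, hA2, hAξ]
        simp only [map_add, map_sub, map_smul, hU2]
        module
      have h2 : ⟪ξ, A (Ust x) - z • ξ⟫_ℂ + (a : ℂ) * (-⟪ξ, Ust x⟫_ℂ + (a : ℂ) * z) = z := by
        rw [inner_sub_right, inner_smul_right, hξA, hip]
        linear_combination z * ha2c
      rw [h1, h2]
    calc Tinv (mkE x z) = Tinv (T w) := by rw [hTw]
      _ = (Tinv ∘L T) w := rfl
      _ = w := by rw [hTinv.1]; rfl
  -- LHS values
  have hLHS : ∀ (x : H) (z : ℂ), (Dinv ∘L T ∘L D) (mkE x z) =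
      Complex.exp (θ * Complex.I) •
        mkE (Vinv (U (A (V x))) + z • Vinv (U ξ)) (⟪ξ, V x⟫_ℂ + (a : ℂ) * z) := by
    intro x z
    show Dinv (T (D (mkE x z))) = _
    rw [hD, hT, map_smul, hDinv, map_add, map_smul]
  have hext : (Dinv ∘L T ∘L D = Tinv) ↔
      ∀ x z, (Dinv ∘L T ∘L D) (mkE x z) = Tinv (mkE x z) := by
    constructor
    · intro h x z; rw [h]
    · intro h; ext v; exact h v.ofLp.1 v.ofLp.2
  rw [hext]
  constructor
  · intro hEq
    have key : ∀ (x : H) (z : ℂ),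
        (Complex.exp (θ * Complex.I) • (Vinv (U (A (V x))) + z • Vinv (U ξ)) =
          Complex.exp (-(θ * Complex.I)) • (A (Ust x) - z • ξ)) ∧
        (Complex.exp (θ * Complex.I) * (⟪ξ, V x⟫_ℂ + (a : ℂ) * z) =
          Complex.exp (-(θ * Complex.I)) * (-⟪ξ, Ust x⟫_ℂ + (a : ℂ) * z)) := by
      intro x z
      have h := hEq x z
      rw [hLHS, hTval, smul_mkE, smul_mkE] at h
      exact mkE_inj h
    have hexp : Complex.exp (θ * Complex.I) = Complex.exp (-(θ * Complex.I)) := by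
      have h2 := (key 0 1).2
      simp only [map_zero, inner_zero_right, mul_one, zero_add, neg_zero] at h2
      exact mul_right_cancel₀ haC h2
    have h4 : Complex.exp (θ * Complex.I) = 1 ∨ Complex.exp (θ * Complex.I) = -1 := by
      apply mul_self_eq_one_iff.1
      rw [← hee', ← hexp]
    have hVUξ : Vinv (U ξ) = -ξ := by
      have h1 := (key 0 1).1
      rw [← hexp] at h1
      simp only [map_zero, zero_add, one_smul, zero_sub] at h1
      exact smul_right_injective H hene h1
    have h2 : V ξ = -(U ξ) := by
      have hUV : U ξ = -(V ξ) := by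
        have := congrArg V hVUξ
        rw [hV2, map_neg] at this
        exact this
      rw [hUV]; simp
    have hptf : ∀ x, Vinv (U (A (V x))) = A (Ust x) := by
      intro x
      have h1 := (key x 0).1
      rw [← hexp] at h1
      simp only [zero_smul, add_zero, sub_zero] at h1
      exact smul_right_injective H hene h1
    have hin : ∀ x, ⟪ξ, V x⟫_ℂ = -⟪ξ, Ust x⟫_ℂ := by
      intro x
      have h2' := (key x 0).2
      rw [← hexp] at h2'
      simp only [mul_zero, add_zero] at h2'
      exact mul_left_cancel₀ hene h2'
    have h3 : Vinv ξ = -(U ξ) := by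
      have hw0 : Vinv ξ + U ξ = 0 := by
        have hx : ∀ x : H, ⟪Vinv ξ + U ξ, x⟫_ℂ = 0 := by
          intro x
          rw [inner_add_left]
          have e1 : ⟪Vinv ξ, x⟫_ℂ = ⟪ξ, V x⟫_ℂ := by
            rw [← hVst]; exact ContinuousLinearMap.adjoint_inner_left V x ξ
          have e2 : ⟪U ξ, x⟫_ℂ = ⟪ξ, Ust x⟫_ℂ :=
            (ContinuousLinearMap.adjoint_inner_right U ξ x).symm
          rw [e1, e2, hin x]; ring
        have := hx (Vinv ξ + U ξ)
        rwa [inner_self_eq_zero] at this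
      linear_combination (norm := module) hw0
    refine ⟨?_, h2, h3, h4⟩
    rw [hadjUA]
    ext x
    simpa using hptf x
  · rintro ⟨h1, h2, h3, h4⟩
    have hexp : Complex.exp (θ * Complex.I) = Complex.exp (-(θ * Complex.I)) := by
      rw [Complex.exp_neg]
      rcases h4 with h | h <;> rw [h] <;> norm_num
    have hpt : ∀ x, Vinv (U (A (V x))) = A (Ust x) := by
      intro x
      have := ContinuousLinearMap.ext_iff.1 (h1.trans hadjUA) x
      simpa using this
    have hVUξ : Vinv (U ξ) = -ξ := by
      have hUV : U ξ = -(V ξ) := by rw [h2]; simp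
      rw [hUV, map_neg, hV1]
    have hin : ∀ x, ⟪ξ, V x⟫_ℂ = -⟪ξ, Ust x⟫_ℂ := by
      intro x
      have e1 : ⟪Vinv ξ, x⟫_ℂ = ⟪ξ, V x⟫_ℂ := by
        rw [← hVst]; exact ContinuousLinearMap.adjoint_inner_left V x ξ
      have e2 : ⟪U ξ, x⟫_ℂ = ⟪ξ, Ust x⟫_ℂ :=
        (ContinuousLinearMap.adjoint_inner_right U ξ x).symm
      rw [← e1, h3, inner_neg_left, e2]
    intro x z
    rw [hLHS, hTval, ← hexp, hpt, hVUξ, hin, smul_neg, ← sub_eq_add_neg]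


end
end
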